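/- Let N be a zero-symmetric unital right near-ring that is regular and left morphic. Then N is unit-regular: for every a ∈ N there exists a unit u of N such that a = a·u·a. -/

import Mathlib

/-- A zero-symmetric unital right near-ring: an additive group (not necessarily
abelian) and a multiplicative monoid with `1 ≠ 0`, satisfying the right
distributive law, and zero-symmetric (`x * 0 = 0`). -/
class ZSNearRing (N : Type*) extends AddGroup N, Monoid N where
  right_distrib : ∀ x y z : N, (x + y) * z = x * z + y * z
  mul_zero : ∀ x : N, x * 0 = 0
  one_ne_zero : (1 : N) ≠ (0 : N)

namespace ZSNearRing

variable {N : Type*} [ZSNearRing N]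

/-- The set `Na = {n·a : n ∈ N}`. -/
def NSet (a : N) : Set N := {x | ∃ n : N, x = n * a}

/-- The left annihilator `(0 :ₗ a) = {x ∈ N : x·a = 0}`. -/
def lAnn (a : N) : Set N := {x | x * a = 0}

/-- `a` is left morphic if there is `b` with `Na = (0 :ₗ b)` and `Nb = (0 :ₗ a)`. -/
def IsLeftMorphic (a : N) : Prop := ∃ b : N, NSet a = lAnn b ∧ NSet b = lAnn a

end ZSNearRing

open ZSNearRing

private lemma zsnr_zero_mul {N : Type*} [ZSNearRing N] (t : N) : (0 : N) * t = 0 := by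
  have h := ZSNearRing.right_distrib (0 : N) 0 t
  rw [add_zero] at h
  exact left_eq_add.mp h

private lemma zsnr_neg_mul {N : Type*} [ZSNearRing N] (w t : N) : (-w) * t = -(w * t) := by
  have h : w * t + (-w) * t = 0 := by
    rw [← ZSNearRing.right_distrib, add_neg_cancel, zsnr_zero_mul]
  exact eq_neg_of_add_eq_zero_right h

theorem stmt14 {N : Type*} [ZSNearRing N]
    (hreg : ∀ a : N, ∃ x : N, a = a * x * a)
    (hmor : ∀ a : N, IsLeftMorphic a) :
    ∀ a : N, ∃ u : N, (∃ v : N, u * v = 1 ∧ v * u = 1) ∧ a = a * u * a := by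
  intro a
  obtain ⟨x, hx⟩ := hreg a
  obtain ⟨b, hNa, hNb⟩ := hmor a
  obtain ⟨y, hy⟩ := hreg b
  -- basic facts
  have hba : b * a = 0 := by
    have hb : b ∈ NSet b := ⟨1, (one_mul b).symm⟩
    rw [hNb] at hb
    exact hb
  set x' : N := x + -(x * (y * b)) with hx'def
  set u : N := x' + b with hudef
  -- x' * a = x * a
  have hxyba : (x * (y * b)) * a = 0 := by
    rw [mul_assoc, mul_assoc, hba, ZSNearRing.mul_zero, ZSNearRing.mul_zero]
  have hx'a : x' * a = x * a := by
    rw [hx'def, ZSNearRing.right_distrib, zsnr_neg_mul, hxyba, neg_zero, add_zero]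
  have hua : u * a = x * a := by
    rw [hudef, ZSNearRing.right_distrib, hba, add_zero, hx'a]
  -- a = a * u * a
  have haua : a = a * u * a := by
    rw [mul_assoc, hua, ← mul_assoc]
    exact hx
  -- b * (y * b) = b
  have hbyb : b * (y * b) = b := by
    rw [← mul_assoc]
    exact hy.symm
  -- x' * (y * b) = 0
  have hx'yb : x' * (y * b) = 0 := by
    have h1 : (x * (y * b)) * (y * b) = x * (y * b) := by
      rw [mul_assoc, mul_assoc, hbyb]
    rw [hx'def, ZSNearRing.right_distrib, zsnr_neg_mul, h1, add_neg_cancel]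
  -- u * (y * b) = b
  have huyb : u * (y * b) = b := by
    rw [hudef, ZSNearRing.right_distrib, hx'yb, hbyb, zero_add]
  -- lAnn u is trivial
  have hannu : ∀ z : N, z * u = 0 → z = 0 := by
    intro z hz
    have hzxa : z * (x * a) = 0 := by
      rw [← hua, ← mul_assoc, hz, zsnr_zero_mul]
    have hzb : z * b = 0 := by
      rw [← huyb, ← mul_assoc, hz, zsnr_zero_mul]
    have hz' : z ∈ lAnn b := hzb
    rw [← hNa] at hz'
    obtain ⟨n, hn⟩ := hz'
    have : z * (x * a) = z := by
      rw [hn, mul_assoc, ← mul_assoc a x a, ← hx]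
    rw [hzxa] at this
    exact this.symm
  -- u is a unit
  obtain ⟨c, hNu, hNc⟩ := hmor u
  have hc0 : c = 0 := by
    have hc : c ∈ NSet c := ⟨1, (one_mul c).symm⟩
    rw [hNc] at hc
    exact hannu c hc
  have h1u : (1 : N) ∈ NSet u := by
    rw [hNu, hc0]
    exact ZSNearRing.mul_zero 1
  obtain ⟨v, hv⟩ := h1u
  have hvu : v * u = 1 := hv.symm
  have huv : u * v = 1 := by
    have h0 : (u * v + -1) * u = 0 := by
      rw [ZSNearRing.right_distrib, zsnr_neg_mul, one_mul, mul_assoc, hvu, mul_one,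
        add_neg_cancel]
    have := hannu _ h0
    have h2 : u * v = 1 := by
      have h3 : u * v + -1 + 1 = 0 + 1 := by rw [this]
      rwa [add_assoc, neg_add_cancel, add_zero, zero_add] at h3
    exact h2
  exact ⟨u, ⟨v, huv, hvu⟩, haua⟩
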